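/- Let h be an odd positive integer, m = 4h, n = 2^m − 1, and let α be a primitive element of the finite field F_{2^m}. Let C = { c = (c_0, …, c_{n−1}) ∈ F_2^n : Σ_{i=0}^{n−1} c_i · α^{j·i} = 0 in F_{2^m} for each j ∈ {1, 1 + 2^{2h}, 1 + 2^h + 2^{2h}} }. Then C is an F_2-linear subspace of F_2^n of dimension 2^m − 1 − 5m/2, and the minimum Hamming weight of a nonzero element of C equals 3. -/

import Mathlib

open Finset

lemma sum_two_pow_injective {S T : Finset ℕ} (hST : ∑ i ∈ S, 2^i = ∑ i ∈ T, 2^i) : S = T := by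
  have key : ∀ S : Finset ℕ, ((S.sort (·≤·)).map (2 ^ ·)).sum = ∑ i ∈ S, 2 ^ i := by
    intro S
    rw [Finset.sum, ← Finset.sort_eq S (·≤·), ← Multiset.sum_coe, ← Multiset.map_coe]
  have h1 := Nat.bitIndices_twoPowsum (Finset.sortedLT_sort S)
  have h2 := Nat.bitIndices_twoPowsum (Finset.sortedLT_sort T)
  rw [key, hST, ← key T, h2] at h1
  have := congrArg List.toFinset h1
  rwa [Finset.sort_toFinset, Finset.sort_toFinset, eq_comm] at this

lemma geo_two (M : ℕ) : ∑ i ∈ range M, 2^i = 2^M - 1 := by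
  induction M with
  | zero => simp
  | succ M ih =>
    rw [Finset.sum_range_succ, ih, pow_succ]
    have : 1 ≤ 2^M := Nat.one_le_two_pow
    omega

/-- `S2 h k` : exponent set for the coset of `1 + 2^(2h)`. -/
def S2 (h k : ℕ) : Finset ℕ := {k % (2*h), k % (2*h) + 2*h}

def e2 (h k : ℕ) : ℕ := ∑ i ∈ S2 h k, 2^i

def S3 (h m k : ℕ) : Finset ℕ := {k, (k+h) % m, (k+2*h) % m}

def e3 (h m k : ℕ) : ℕ := ∑ i ∈ S3 h m k, 2^i

section arith
variable {h m k : ℕ} (hh : 0 < h) (hm : m = 4*h)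

include hh in
lemma S2_card : (S2 h k).card = 2 := by
  rw [S2, Finset.card_pair (by omega)]

include hh in
lemma e2_eq : e2 h k = 2^(k % (2*h)) + 2^(k % (2*h) + 2*h) := by
  rw [e2, S2, Finset.sum_pair (by omega)]

lemma mod_ne {d d' : ℕ} (hd : d < m) (hd' : d' < m) (hdd' : d ≠ d') :
    (k + d) % m ≠ (k + d') % m := by
  intro heq
  have : d % m = d' % m := Nat.ModEq.add_left_cancel' k heq
  rw [Nat.mod_eq_of_lt hd, Nat.mod_eq_of_lt hd'] at this
  exact hdd' this

include hh hm in
lemma S3_mem_ne (hk : k < m) :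
    k ≠ (k+h) % m ∧ k ≠ (k+2*h) % m ∧ (k+h) % m ≠ (k+2*h) % m := by
  refine ⟨?_, ?_, mod_ne (by omega) (by omega) (by omega)⟩
  · intro he
    have : (k+0) % m = (k+h) % m := by rw [Nat.add_zero, Nat.mod_eq_of_lt hk]; exact he
    exact mod_ne (m := m) (k := k) (by omega) (by omega) (by omega) this
  · intro he
    have : (k+0) % m = (k+2*h) % m := by rw [Nat.add_zero, Nat.mod_eq_of_lt hk]; exact he
    exact mod_ne (m := m) (k := k) (by omega) (by omega) (by omega) this

include hh hm in
lemma S3_card (hk : k < m) : (S3 h m k).card = 3 := by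
  obtain ⟨h1, h2, h3⟩ := S3_mem_ne hh hm hk
  rw [S3, Finset.card_insert_of_notMem (by simp [h1, h2]),
    Finset.card_insert_of_notMem (by simp [h3]), Finset.card_singleton]

include hh hm in
lemma e3_eq (hk : k < m) : e3 h m k = 2^k + 2^((k+h) % m) + 2^((k+2*h) % m) := by
  obtain ⟨h1, h2, h3⟩ := S3_mem_ne hh hm hk
  rw [e3, S3, Finset.sum_insert (by simp [h1, h2]), Finset.sum_insert (by simp [h3]),
    Finset.sum_singleton, add_assoc]

lemma sum_two_pow_le {S : Finset ℕ} {m : ℕ} (hS : ∀ i ∈ S, i < m) : ∑ i ∈ S, 2^i ≤ 2^m - 1 := by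
  calc ∑ i ∈ S, 2^i ≤ ∑ i ∈ range m, 2^i :=
        Finset.sum_le_sum_of_subset (fun i hi => Finset.mem_range.mpr (hS i hi))
    _ = 2^m - 1 := geo_two m

lemma sum_two_pow_pos {S : Finset ℕ} (hS : S.Nonempty) : 1 ≤ ∑ i ∈ S, 2^i := by
  obtain ⟨i, hi⟩ := hS
  exact le_trans Nat.one_le_two_pow (Finset.single_le_sum (f := (2^·)) (by intros; positivity) hi)

include hh hm in
lemma e2_le (hk : k < m) : e2 h k ≤ 2^m - 1 := by
  refine sum_two_pow_le ?_
  intro i hi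
  rw [S2] at hi
  have := Nat.mod_lt k (y := 2*h) (by omega)
  simp at hi
  omega

lemma e2_pos : 1 ≤ e2 h k := sum_two_pow_pos ⟨k % (2*h), by simp [S2]⟩

include hm in
lemma e3_le (hk : k < m) : e3 h m k ≤ 2^m - 1 := by
  refine sum_two_pow_le ?_
  intro i hi
  rw [S3] at hi
  have h1 := Nat.mod_lt (k+h) (y := m) (by omega)
  have h2 := Nat.mod_lt (k+2*h) (y := m) (by omega)
  simp at hi
  omega

lemma e3_pos : 1 ≤ e3 h m k := sum_two_pow_pos ⟨k, by simp [S3]⟩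

end arith

section arith2
variable {h m k : ℕ} (hh : 0 < h) (hm : m = 4*h)

include hh in
lemma e2_ne_one : e2 h k ≠ 1 := by
  intro he
  rw [e2] at he
  have h1 : (S2 h k) = {0} := sum_two_pow_injective (by simpa using he)
  have h2 := S2_card (k := k) hh
  rw [h1] at h2; simp at h2

include hh hm in
lemma e3_ne_one (hk : k < m) : e3 h m k ≠ 1 := by
  intro he
  rw [e3] at he
  have h1 : (S3 h m k) = {0} := sum_two_pow_injective (by simpa using he)
  have h2 := S3_card hh hm hk
  rw [h1] at h2; simp at h2

include hh in
lemma E2_repr : 1 + 2^(2*h) = ∑ i ∈ ({0, 2*h} : Finset ℕ), 2^i := by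
  rw [Finset.sum_pair (by omega)]; simp

include hh in
lemma E2_card : ({0, 2*h} : Finset ℕ).card = 2 := Finset.card_pair (by omega)

include hh in
lemma pow_ne_E2 (j : ℕ) : 2^j ≠ 1 + 2^(2*h) := by
  intro he
  have h1 : ({j} : Finset ℕ) = {0, 2*h} :=
    sum_two_pow_injective (by rw [← E2_repr hh]; simpa using he)
  have h2 := E2_card (h := h) hh
  rw [← h1] at h2; simp at h2

include hh hm in
lemma e3_ne_E2 (hk : k < m) : e3 h m k ≠ 1 + 2^(2*h) := by
  intro he
  rw [e3] at he
  have h1 : S3 h m k = {0, 2*h} := sum_two_pow_injective (by rw [← E2_repr hh]; exact he)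
  have h2 := S3_card hh hm hk
  rw [h1, E2_card hh] at h2; omega

include hh hm in
lemma e2_eq_E2_iff (hk : k < m) : e2 h k = 1 + 2^(2*h) ↔ (k = 0 ∨ k = 2*h) := by
  constructor
  · intro he
    rw [e2] at he
    have h1 : S2 h k = {0, 2*h} := sum_two_pow_injective (by rw [← E2_repr hh]; exact he)
    have h2 : k % (2*h) ∈ ({0, 2*h} : Finset ℕ) := by
      rw [← h1, S2]; exact Finset.mem_insert_self _ _
    have h3 : k % (2*h) < 2*h := Nat.mod_lt _ (by omega)
    have h4 : k % (2*h) = 0 := by simp at h2; omega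
    have h5 := Nat.div_add_mod k (2*h)
    have h6 : k / (2*h) < 2 := by
      by_contra h'
      push_neg at h'
      have : 2*h*2 ≤ 2*h*(k/(2*h)) := Nat.mul_le_mul_left _ h'
      omega
    interval_cases hq : k / (2*h) <;> omega
  · rintro (rfl | rfl)
    · rw [e2_eq hh, Nat.zero_mod]; simp
    · rw [e2_eq hh, Nat.mod_self]; simp

include hh in
lemma E3_repr : 1 + 2^h + 2^(2*h) = ∑ i ∈ ({0, h, 2*h} : Finset ℕ), 2^i := by
  rw [Finset.sum_insert (by simp; omega), Finset.sum_pair (by omega)]; simp; omega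

include hh in
lemma E3_card : ({0, h, 2*h} : Finset ℕ).card = 3 := by
  rw [Finset.card_insert_of_notMem (by simp; omega), Finset.card_pair (by omega)]

include hh in
lemma pow_ne_E3 (j : ℕ) : 2^j ≠ 1 + 2^h + 2^(2*h) := by
  intro he
  have h1 : ({j} : Finset ℕ) = {0, h, 2*h} :=
    sum_two_pow_injective (by rw [← E3_repr hh]; simpa using he)
  have h2 := E3_card (h := h) hh
  rw [← h1] at h2; simp at h2

include hh in
lemma e2_ne_E3 : e2 h k ≠ 1 + 2^h + 2^(2*h) := by
  intro he
  rw [e2] at he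
  have h1 : S2 h k = {0, h, 2*h} := sum_two_pow_injective (by rw [← E3_repr hh]; exact he)
  have h2 := S2_card (k := k) hh
  rw [h1, E3_card hh] at h2; omega

include hh hm in
lemma e3_eq_E3_iff (hk : k < m) : e3 h m k = 1 + 2^h + 2^(2*h) ↔ k = 0 := by
  constructor
  · intro he
    rw [e3] at he
    have h1 : S3 h m k = {0, h, 2*h} := sum_two_pow_injective (by rw [← E3_repr hh]; exact he)
    have h2 : k ∈ ({0, h, 2*h} : Finset ℕ) := by
      rw [← h1, S3]; exact Finset.mem_insert_self _ _
    simp at h2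
    rcases h2 with h2 | h2 | h2
    · exact h2
    · exfalso
      rw [h2] at h1
      have hS : S3 h m h = {h, 2*h, 3*h} := by
        rw [S3]
        congr 2
        · rw [Nat.mod_eq_of_lt (by omega)]; omega
        · rw [Nat.mod_eq_of_lt (by omega)]
          congr 1
          omega
      have h0 : (0:ℕ) ∈ ({h, 2*h, 3*h} : Finset ℕ) := by
        rw [← hS, h1]; simp
      simp at h0; omega
    · exfalso
      rw [h2] at h1
      have hS : S3 h m (2*h) = {2*h, 3*h, 0} := by
        rw [S3]
        congr 2
        · rw [Nat.mod_eq_of_lt (by omega)]; omega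
        · rw [show 2*h + 2*h = m by omega, Nat.mod_self]
      have h0 : h ∈ ({2*h, 3*h, 0} : Finset ℕ) := by
        rw [← hS, h1]; simp
      simp at h0; omega
  · rintro rfl
    rw [e3_eq hh hm hk, Nat.zero_add, Nat.zero_add, Nat.mod_eq_of_lt (by omega),
      Nat.mod_eq_of_lt (by omega)]
    simp

lemma two_pow_mod (hm0 : 0 < m) (j : ℕ) : 2^j % (2^m - 1) = 2^(j % m) % (2^m - 1) := by
  have h2 : (2:ℕ)^m ≡ 1 [MOD 2^m - 1] := by
    show (2:ℕ)^m % (2^m - 1) = 1 % (2^m - 1)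
    have h1 : (1:ℕ) ≤ 2^m := Nat.one_le_two_pow
    have h3 : ((2^m - 1) + 1) % (2^m - 1) = 1 % (2^m - 1) := Nat.add_mod_left _ _
    rwa [Nat.sub_add_cancel h1] at h3
  conv_lhs => rw [← Nat.div_add_mod j m]
  rw [pow_add, pow_mul]
  simpa [Nat.ModEq] using (h2.pow (j / m)).mul_right (2^(j % m))

include hh hm in
lemma cong2 (hk : k < m) : (1 + 2^(2*h)) * 2^k % (2^m-1) = e2 h k % (2^m-1) := by
  have hexp : (1+2^(2*h))*2^k = 2^k + 2^(2*h+k) := by rw [add_mul, one_mul, ← pow_add]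
  rcases lt_or_ge k (2*h) with h1 | h1
  · have : (1+2^(2*h))*2^k = e2 h k := by
      rw [hexp, e2_eq hh, Nat.mod_eq_of_lt h1, Nat.add_comm (2*h) k]
    rw [this]
  · have hkm : k % (2*h) = k - 2*h := by
      rw [Nat.mod_eq_sub_mod h1, Nat.mod_eq_of_lt (by omega)]
    have he2' : e2 h k = 2^(k-2*h) + 2^k := by
      rw [e2_eq hh, hkm, Nat.sub_add_cancel h1]
    rw [hexp, he2']
    have hc := two_pow_mod (m := m) (by omega) (2*h+k)
    have hmod : (2*h+k) % m = k - 2*h := by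
      rw [Nat.mod_eq_sub_mod (by omega), Nat.mod_eq_of_lt (by omega)]
      omega
    rw [hmod] at hc
    have h5 := (Nat.ModEq.add_left (2^k) hc)
    rw [Nat.add_comm (2^(k-2*h))]
    exact h5

include hh hm in
lemma cong3 (hk : k < m) : (1 + 2^h + 2^(2*h)) * 2^k % (2^m-1) = e3 h m k % (2^m-1) := by
  have hexp : (1+2^h+2^(2*h))*2^k = 2^k + 2^(h+k) + 2^(2*h+k) := by
    rw [add_mul, add_mul, one_mul, ← pow_add, ← pow_add]
  rw [hexp, e3_eq hh hm hk]
  have c1 := two_pow_mod (m := m) (by omega) (h+k)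
  rw [show (h+k) % m = (k+h) % m by rw [Nat.add_comm]] at c1
  have c2 := two_pow_mod (m := m) (by omega) (2*h+k)
  rw [show (2*h+k) % m = (k+2*h) % m by rw [Nat.add_comm]] at c2
  exact ((Nat.ModEq.refl (2^k)).add c1).add c2

end arith2

lemma pow_le_sub_one {k m : ℕ} (hk : k < m) : 2^k ≤ 2^m - 1 := by
  have h1 : (2:ℕ)^k * 2 ≤ 2^m := by
    rw [← pow_succ]; exact Nat.pow_le_pow_right (by norm_num) (by omega)
  have h2 : (1:ℕ) ≤ 2^k := Nat.one_le_two_pow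
  omega

theorem keylemma (h m : ℕ) (hh : 0 < h) (hm : m = 4 * h) (F : Type) [Field F] [Fintype F]
    (hF : Fintype.card F = 2 ^ m) (a b c : F)
    (hx : ∀ x : F, (∑ k ∈ Finset.range m, (a * x) ^ 2 ^ k)
        + (∑ k ∈ Finset.range m, (b * x ^ (1 + 2 ^ (2*h))) ^ 2 ^ k)
        + (∑ k ∈ Finset.range m, (c * x ^ (1 + 2^h + 2 ^ (2*h))) ^ 2 ^ k) = 0) :
    a = 0 ∧ b + b ^ 2 ^ (2*h) = 0 ∧ c = 0 := by
  classical
  have hm0 : 0 < m := by omega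
  have hxn : ∀ x : F, x ≠ 0 → x ^ (2^m - 1) = 1 := fun x hx0 => by
    rw [← hF]; exact FiniteField.pow_card_sub_one_eq_one x hx0
  have hred : ∀ (x : F) (s : ℕ), x ≠ 0 → x ^ s = x ^ (s % (2^m-1)) := by
    intro x s hx0
    conv_lhs => rw [← Nat.div_add_mod s (2^m-1)]
    rw [pow_add, pow_mul, hxn x hx0, one_pow, one_mul]
  have hcongr : ∀ (x : F) (s t : ℕ), 0 < s → 0 < t → s % (2^m-1) = t % (2^m-1) → x ^ s = x ^ t := by
    intro x s t hs ht hst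
    rcases eq_or_ne x 0 with rfl | hx0
    · rw [zero_pow hs.ne', zero_pow ht.ne']
    · rw [hred x s hx0, hred x t hx0, hst]
  set Q : Polynomial F :=
      (∑ k ∈ Finset.range m, Polynomial.monomial (2^k) (a^2^k))
    + (∑ k ∈ Finset.range m, Polynomial.monomial (e2 h k) (b^2^k))
    + (∑ k ∈ Finset.range m, Polynomial.monomial (e3 h m k) (c^2^k)) with hQdef
  have heval : ∀ x : F, Q.eval x = 0 := by
    intro x
    rw [hQdef]
    simp only [Polynomial.eval_add, Polynomial.eval_finset_sum, Polynomial.eval_monomial]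
    have e1t : ∀ k ∈ Finset.range m, a^2^k * x^(2^k) = (a*x)^2^k := fun k _ => (mul_pow a x _).symm
    have e2t : ∀ k ∈ Finset.range m, b^2^k * x^(e2 h k) = (b * x^(1+2^(2*h)))^2^k := by
      intro k hk
      rw [mul_pow, ← pow_mul]
      congr 1
      exact hcongr x (e2 h k) ((1+2^(2*h)) * 2^k) e2_pos (by positivity)
        (cong2 hh hm (Finset.mem_range.mp hk)).symm
    have e3t : ∀ k ∈ Finset.range m, c^2^k * x^(e3 h m k) = (c * x^(1+2^h+2^(2*h)))^2^k := by
      intro k hk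
      rw [mul_pow, ← pow_mul]
      congr 1
      exact hcongr x _ _ e3_pos (by positivity) (cong3 hh hm (Finset.mem_range.mp hk)).symm
    rw [Finset.sum_congr rfl e1t, Finset.sum_congr rfl e2t, Finset.sum_congr rfl e3t]
    exact hx x
  have hQ0 : Q = 0 := by
    apply Polynomial.eq_zero_of_forall_eval_zero_of_natDegree_lt_card Q heval
    rw [Cardinal.mk_fintype, hF]
    have hb : Q.natDegree ≤ 2^m - 1 := by
      rw [hQdef]
      refine le_trans (Polynomial.natDegree_add_le _ _) (max_le (le_trans (Polynomial.natDegree_add_le _ _) (max_le ?_ ?_)) ?_)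
      · exact Polynomial.natDegree_sum_le_of_forall_le _ _ fun k hk =>
          le_trans (Polynomial.natDegree_monomial_le _) (pow_le_sub_one (Finset.mem_range.mp hk))
      · exact Polynomial.natDegree_sum_le_of_forall_le _ _ fun k hk =>
          le_trans (Polynomial.natDegree_monomial_le _) (e2_le hh hm (Finset.mem_range.mp hk))
      · exact Polynomial.natDegree_sum_le_of_forall_le _ _ fun k hk =>
          le_trans (Polynomial.natDegree_monomial_le _) (e3_le hm (Finset.mem_range.mp hk))
    have h2 : (1:ℕ) ≤ 2^m := Nat.one_le_two_pow
    exact_mod_cast (by omega : Q.natDegree < 2^m)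
  have hca : a = 0 := by
    have h1 := congrArg (fun p => Polynomial.coeff p 1) hQ0
    simp only [hQdef, Polynomial.coeff_add, Polynomial.finset_sum_coeff,
      Polynomial.coeff_monomial, Polynomial.coeff_zero] at h1
    have s1 : (∑ k ∈ Finset.range m, if 2^k = 1 then a^2^k else 0) = a := by
      rw [Finset.sum_eq_single 0]
      · simp
      · intro k hk hk0
        rw [if_neg (by have := Nat.one_lt_two_pow hk0; omega)]
      · intro habs; exact absurd (Finset.mem_range.mpr hm0) habs
    have s2 : (∑ k ∈ Finset.range m, if e2 h k = 1 then b^2^k else 0) = 0 :=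
      Finset.sum_eq_zero fun k _ => if_neg (e2_ne_one hh)
    have s3 : (∑ k ∈ Finset.range m, if e3 h m k = 1 then c^2^k else 0) = 0 :=
      Finset.sum_eq_zero fun k hk => if_neg (e3_ne_one hh hm (Finset.mem_range.mp hk))
    rw [s1, s2, s3] at h1
    simpa using h1
  have hcb : b + b^2^(2*h) = 0 := by
    have h1 := congrArg (fun p => Polynomial.coeff p (1 + 2^(2*h))) hQ0
    simp only [hQdef, Polynomial.coeff_add, Polynomial.finset_sum_coeff,
      Polynomial.coeff_monomial, Polynomial.coeff_zero] at h1
    have s1 : (∑ k ∈ Finset.range m, if 2^k = 1 + 2^(2*h) then a^2^k else 0) = 0 :=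
      Finset.sum_eq_zero fun k _ => if_neg (pow_ne_E2 hh k)
    have s2 : (∑ k ∈ Finset.range m, if e2 h k = 1 + 2^(2*h) then b^2^k else 0)
        = b + b^2^(2*h) := by
      have hsplit : ∀ k ∈ Finset.range m, (if e2 h k = 1 + 2^(2*h) then b^2^k else 0) =
          (if k = 0 then b else 0) + (if k = 2*h then b^2^(2*h) else 0) := by
        intro k hk
        by_cases h0 : k = 0
        · subst h0
          rw [if_pos ((e2_eq_E2_iff hh hm hm0).mpr (Or.inl rfl)), if_pos rfl, if_neg (by omega)]
          simp
        · by_cases h2 : k = 2*h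
          · subst h2
            rw [if_pos ((e2_eq_E2_iff hh hm (Finset.mem_range.mp hk)).mpr (Or.inr rfl)),
              if_neg h0, if_pos rfl]
            simp
          · rw [if_neg (fun hc => by
                rcases (e2_eq_E2_iff hh hm (Finset.mem_range.mp hk)).mp hc with hv | hv
                · exact h0 hv
                · exact h2 hv), if_neg h0, if_neg h2]
            simp
      rw [Finset.sum_congr rfl hsplit, Finset.sum_add_distrib,
        Finset.sum_ite_eq' (Finset.range m) 0, Finset.sum_ite_eq' (Finset.range m) (2*h),
        if_pos (Finset.mem_range.mpr hm0), if_pos (Finset.mem_range.mpr (by omega))]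
    have s3 : (∑ k ∈ Finset.range m, if e3 h m k = 1 + 2^(2*h) then c^2^k else 0) = 0 :=
      Finset.sum_eq_zero fun k hk => if_neg (e3_ne_E2 hh hm (Finset.mem_range.mp hk))
    rw [s1, s2, s3] at h1
    simpa using h1
  have hcc : c = 0 := by
    have h1 := congrArg (fun p => Polynomial.coeff p (1 + 2^h + 2^(2*h))) hQ0
    simp only [hQdef, Polynomial.coeff_add, Polynomial.finset_sum_coeff,
      Polynomial.coeff_monomial, Polynomial.coeff_zero] at h1
    have s1 : (∑ k ∈ Finset.range m, if 2^k = 1 + 2^h + 2^(2*h) then a^2^k else 0) = 0 :=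
      Finset.sum_eq_zero fun k _ => if_neg (pow_ne_E3 hh k)
    have s2 : (∑ k ∈ Finset.range m, if e2 h k = 1 + 2^h + 2^(2*h) then b^2^k else 0) = 0 :=
      Finset.sum_eq_zero fun k _ => if_neg (e2_ne_E3 hh)
    have s3 : (∑ k ∈ Finset.range m, if e3 h m k = 1 + 2^h + 2^(2*h) then c^2^k else 0) = c := by
      rw [Finset.sum_eq_single 0]
      · rw [if_pos ((e3_eq_E3_iff hh hm hm0).mpr rfl)]; simp
      · intro k hk hk0
        exact if_neg (fun hc => hk0 ((e3_eq_E3_iff hh hm (Finset.mem_range.mp hk)).mp hc))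
      · intro habs; exact absurd (Finset.mem_range.mpr hm0) habs
    rw [s1, s2, s3] at h1
    simpa using h1
  exact ⟨hca, hcb, hcc⟩

section trace
variable {F : Type} [Field F] [Fintype F] {m h : ℕ}

lemma tr_add [CharP F 2] (r : ℕ) (x y : F) :
    ∑ k ∈ Finset.range r, (x+y)^2^k
      = (∑ k ∈ Finset.range r, x^2^k) + ∑ k ∈ Finset.range r, y^2^k := by
  rw [← Finset.sum_add_distrib]
  exact Finset.sum_congr rfl fun k _ => add_pow_char_pow x y 2 k

lemma tr_zero (r : ℕ) : ∑ k ∈ Finset.range r, (0:F)^2^k = 0 :=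
  Finset.sum_eq_zero fun k _ => zero_pow (by positivity)

lemma tr_sq [CharP F 2] (hF : Fintype.card F = 2^m) (x : F) :
    (∑ k ∈ Finset.range m, x^2^k)^2 = ∑ k ∈ Finset.range m, x^2^k := by
  have h1 : (∑ k ∈ Finset.range m, x^2^k)^2 = ∑ k ∈ Finset.range m, x^(2^(k+1)) := by
    rw [sum_pow_char]
    exact Finset.sum_congr rfl fun k _ => by rw [← pow_mul, ← pow_succ]
  have h2 : (∑ k ∈ Finset.range m, x^(2^(k+1))) - (∑ k ∈ Finset.range m, x^(2^k))
      = x^(2^m) - x^(2^0) := by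
    rw [← Finset.sum_sub_distrib]
    exact Finset.sum_range_sub (fun k => x^(2^k)) m
  have h3 : x^(2^m) = x := by rw [← hF]; exact FiniteField.pow_card x
  rw [h3, pow_zero, pow_one, sub_self] at h2
  rw [h1]
  exact sub_eq_zero.mp h2

lemma tr_zero_or_one [CharP F 2] (hF : Fintype.card F = 2^m) (x : F) :
    (∑ k ∈ Finset.range m, x^2^k) = 0 ∨ (∑ k ∈ Finset.range m, x^2^k) = 1 := by
  have h1 := tr_sq hF x
  have h2 : (∑ k ∈ Finset.range m, x^2^k) * ((∑ k ∈ Finset.range m, x^2^k) - 1) = 0 := by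
    linear_combination h1
  rcases mul_eq_zero.mp h2 with h | h
  · exact Or.inl h
  · exact Or.inr (by linear_combination h)

lemma tr_exists_ne (hm0 : 0 < m) (hF : Fintype.card F = 2^m) :
    ∃ y : F, ∑ k ∈ Finset.range m, y^2^k ≠ 0 := by
  classical
  set T : Polynomial F := ∑ k ∈ Finset.range m, Polynomial.monomial (2^k) (1:F) with hT
  have hTne : T ≠ 0 := by
    intro h0
    have h1 := congrArg (fun p => Polynomial.coeff p 1) h0
    simp only [hT, Polynomial.finset_sum_coeff, Polynomial.coeff_monomial,
      Polynomial.coeff_zero] at h1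
    rw [Finset.sum_eq_single 0] at h1
    · simp at h1
    · intro k hk hk0
      rw [if_neg (by have := Nat.one_lt_two_pow hk0; omega)]
    · intro habs; exact absurd (Finset.mem_range.mpr hm0) habs
  have hTdeg : T.natDegree ≤ 2^m - 1 := by
    rw [hT]
    exact Polynomial.natDegree_sum_le_of_forall_le _ _ fun k hk =>
      le_trans (Polynomial.natDegree_monomial_le _) (pow_le_sub_one (Finset.mem_range.mp hk))
  obtain ⟨y, hy⟩ := Polynomial.exists_eval_ne_zero_of_natDegree_lt_card T hTne (by
    rw [Cardinal.mk_fintype, hF]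
    have h2 : (1:ℕ) ≤ 2^m := Nat.one_le_two_pow
    exact_mod_cast (by omega : T.natDegree < 2^m))
  refine ⟨y, ?_⟩
  have : T.eval y = ∑ k ∈ Finset.range m, y^2^k := by
    rw [hT, Polynomial.eval_finset_sum]
    exact Finset.sum_congr rfl fun k _ => by rw [Polynomial.eval_monomial, one_mul]
  rwa [this] at hy

lemma tr_K_zero [CharP F 2] {y : F} (hy : y^(2^(2*h)) = y) :
    ∑ k ∈ Finset.range (4*h), y^2^k = 0 := by
  have hsplit := Finset.sum_range_add (fun k => y^(2^k)) (2*h) (2*h)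
  rw [show 2*h + 2*h = 4*h by omega] at hsplit
  rw [hsplit]
  have heq : ∀ j ∈ Finset.range (2*h), y^(2^(2*h + j)) = y^(2^j) := by
    intro j _
    rw [pow_add, pow_mul, hy]
  rw [Finset.sum_congr rfl heq]
  exact CharTwo.add_self_eq_zero _

end trace

lemma sixteen_pow {h : ℕ} (hh : 1 ≤ h) : 16 * h ≤ 16 ^ h := by
  induction h with
  | zero => omega
  | succ h ih =>
    rcases Nat.eq_zero_or_pos h with rfl | hp
    · norm_num
    · have h1 := ih hp
      have h4 : h + 1 ≤ 16^h := by omega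
      have h2 : (16:ℕ)^(h+1) = 16 * 16^h := by rw [pow_succ]; ring
      rw [h2]
      exact Nat.mul_le_mul_left 16 h4

set_option maxHeartbeats 1000000 in
theorem stmt_15 (h : ℕ) (hh : 0 < h) (hho : Odd h) (m n : ℕ) (hm : m = 4 * h)
    (hn : n = 2 ^ m - 1)
    (F : Type) [Field F] [Fintype F] [Algebra (ZMod 2) F]
    (hF : Fintype.card F = 2 ^ m) (α : F) (hα : orderOf α = n)
    (C : Set (Fin n → ZMod 2))
    (hC : C = {c | ∀ j ∈ ({1, 1 + 2 ^ (2 * h), 1 + 2 ^ h + 2 ^ (2 * h)} : Set ℕ),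
                 ∑ i : Fin n, c i • α ^ (j * (i : ℕ)) = 0}) :
    (∃ W : Submodule (ZMod 2) (Fin n → ZMod 2),
        (W : Set (Fin n → ZMod 2)) = C ∧
        Module.finrank (ZMod 2) W = 2 ^ m - 1 - 5 * m / 2) ∧
    IsLeast {w : ℕ | ∃ c ∈ C, c ≠ 0 ∧ hammingNorm c = w} 3 := by
  classical
  have hm0 : 0 < m := by omega
  have hn2 : (1:ℕ) ≤ 2^m := Nat.one_le_two_pow
  have h16 : (16:ℕ) ≤ 2^m := by
    calc (16:ℕ) = 2^4 := by norm_num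
    _ ≤ 2^m := Nat.pow_le_pow_right (by norm_num) (by omega)
  have hn15 : 15 ≤ n := by omega
  have hinj : Function.Injective (algebraMap (ZMod 2) F) := (algebraMap (ZMod 2) F).injective
  haveI : CharP F 2 := charP_of_injective_algebraMap hinj 2
  have h2F : (2:F) = 0 := CharTwo.two_eq_zero
  have hα1 : α ^ n = 1 := by rw [← hα]; exact pow_orderOf_eq_one α
  have hα0 : α ≠ 0 := by
    intro h0
    rw [h0, zero_pow (by omega : n ≠ 0)] at hα1
    exact zero_ne_one hα1
  have hpow_inj : ∀ i j : ℕ, i < n → j < n → α^i = α^j → i = j := by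
    intro i j hi hj hij
    exact pow_injOn_Iio_orderOf (by simpa [hα] using hi) (by simpa [hα] using hj) hij
  constructor
  · -- dimension part
    set t2 := 1 + 2^(2*h) with ht2
    set t3 := 1 + 2^h + 2^(2*h) with ht3
    have ht2pos : 0 < t2 := by rw [ht2]; positivity
    have ht3pos : 0 < t3 := by rw [ht3]; positivity
    have hzmod : ∀ r : ZMod 2, r = 0 ∨ r = 1 := by decide
    -- the syndrome maps
    have hL : ∀ j : ℕ, ∃ L : (Fin n → ZMod 2) →ₗ[ZMod 2] F,
        ∀ x, L x = ∑ i : Fin n, x i • α ^ (j * (i:ℕ)) := by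
      intro j
      refine ⟨∑ i : Fin n, LinearMap.smulRight (LinearMap.proj i) (α ^ (j * (i:ℕ))), fun x => ?_⟩
      rw [LinearMap.sum_apply]
      exact Finset.sum_congr rfl fun i _ => by
        rw [LinearMap.smulRight_apply, LinearMap.proj_apply]
    obtain ⟨L1, hL1⟩ := hL 1
    obtain ⟨L2, hL2⟩ := hL t2
    obtain ⟨L3, hL3⟩ := hL t3
    set φ := L1.prod (L2.prod L3) with hφ
    have hφapp : ∀ x, φ x = (L1 x, L2 x, L3 x) := fun x => rfl
    -- ker φ = C
    have hker : (LinearMap.ker φ : Set (Fin n → ZMod 2)) = C := by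
      rw [hC]
      ext x
      simp only [SetLike.mem_coe, LinearMap.mem_ker, Set.mem_setOf_eq]
      rw [hφapp, Prod.mk_eq_zero, Prod.mk_eq_zero]
      constructor
      · rintro ⟨h1, h2, h3⟩ j hj
        simp only [Set.mem_insert_iff, Set.mem_singleton_iff] at hj
        rcases hj with rfl | rfl | rfl
        · rw [← hL1]; exact h1
        · rw [← hL2]; exact h2
        · rw [← hL3]; exact h3
      · intro hx
        exact ⟨by rw [hL1]; exact hx 1 (by simp),
          by rw [hL2]; exact hx t2 (by simp),
          by rw [hL3]; exact hx t3 (by simp)⟩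
    -- the Frobenius-difference map π and the subfield submodule K
    have hπsmul : ∀ (r : ZMod 2) (x : F),
        (r • x) ^ (2^(2*h)) + r • x = r • (x ^ (2^(2*h)) + x) := by
      intro r x
      rcases hzmod r with rfl | rfl
      · rw [zero_smul, zero_smul, zero_pow (by positivity), add_zero]
      · rw [one_smul, one_smul]
    set π : F →ₗ[ZMod 2] F :=
      { toFun := fun x => x ^ (2^(2*h)) + x
        map_add' := fun x y => by
          show (x+y) ^ (2^(2*h)) + (x+y) = (x ^ (2^(2*h)) + x) + (y ^ (2^(2*h)) + y)
          rw [add_pow_char_pow x y 2 (2*h)]; ring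
        map_smul' := fun r x => by rw [RingHom.id_apply]; exact hπsmul r x } with hπ
    have hπapp : ∀ x : F, π x = x ^ (2^(2*h)) + x := fun x => rfl
    set K := LinearMap.ker π with hK
    have hpowcard : ∀ x : F, (x ^ (2^(2*h))) ^ (2^(2*h)) = x := by
      intro x
      rw [← pow_mul, ← pow_add, show 2*h + 2*h = m from by omega, ← hF]
      exact FiniteField.pow_card x
    have hrangeπ : LinearMap.range π ≤ K := by
      rintro y ⟨x, rfl⟩
      rw [hK, LinearMap.mem_ker, hπapp, hπapp]
      have hexp : (x ^ (2^(2*h)) + x)^(2^(2*h)) = x + x^(2^(2*h)) := by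
        rw [add_pow_char_pow _ _ 2 (2*h), hpowcard]
      rw [hexp]
      linear_combination (x + x^(2^(2*h))) * h2F
    -- finranks of F and K
    have hrkF : Module.finrank (ZMod 2) F = m := by
      have hcard := Module.card_eq_pow_finrank (K := ZMod 2) (V := F)
      rw [ZMod.card, hF] at hcard
      exact Nat.pow_right_injective (le_refl 2) hcard.symm
    have hN4 : (4:ℕ) ≤ 2^(2*h) := by
      calc (4:ℕ) = 2^2 := by norm_num
      _ ≤ 2^(2*h) := Nat.pow_le_pow_right (by norm_num) (by omega)
    have hrkK : Module.finrank (ZMod 2) K = 2*h := by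
      have hup : Module.finrank (ZMod 2) K ≤ 2*h := by
        set q : Polynomial F := Polynomial.X ^ (2^(2*h)) + Polynomial.X with hq
        have hqne : q ≠ 0 := by
          intro h0
          have h1 := congrArg (fun p => Polynomial.coeff p 1) h0
          simp only [hq, Polynomial.coeff_add, Polynomial.coeff_X_pow, Polynomial.coeff_X_one,
            Polynomial.coeff_zero] at h1
          rw [if_neg (by omega)] at h1
          simp at h1
        have hqdeg : q.natDegree ≤ 2^(2*h) := by
          rw [hq]
          refine le_trans (Polynomial.natDegree_add_le _ _) (max_le ?_ ?_)
          · rw [Polynomial.natDegree_X_pow]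
          · rw [Polynomial.natDegree_X]; omega
        have hcardK : Fintype.card K ≤ 2^(2*h) := by
          have hsub : (Finset.univ.filter fun x : F => x ∈ K) ⊆ q.roots.toFinset := by
            intro x hx
            rw [Multiset.mem_toFinset, Polynomial.mem_roots']
            refine ⟨hqne, ?_⟩
            have hxK := (Finset.mem_filter.mp hx).2
            rw [hK, LinearMap.mem_ker, hπapp] at hxK
            rw [Polynomial.IsRoot, hq]
            simp only [Polynomial.eval_add, Polynomial.eval_pow, Polynomial.eval_X]
            exact hxK
          calc Fintype.card K = (Finset.univ.filter fun x : F => x ∈ K).card :=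
                Fintype.card_subtype _
            _ ≤ q.roots.toFinset.card := Finset.card_le_card hsub
            _ ≤ Multiset.card q.roots := Multiset.toFinset_card_le _
            _ ≤ q.natDegree := Polynomial.card_roots' q
            _ ≤ 2^(2*h) := hqdeg
        have hcardK2 : Fintype.card K = 2 ^ Module.finrank (ZMod 2) K := by
          have hc := Module.card_eq_pow_finrank (K := ZMod 2) (V := K)
          rwa [ZMod.card] at hc
        rw [hcardK2] at hcardK
        exact (Nat.pow_le_pow_iff_right (by norm_num)).mp hcardK
      have hlow : 2*h ≤ Module.finrank (ZMod 2) K := by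
        have hrn := LinearMap.finrank_range_add_finrank_ker π
        rw [hrkF] at hrn
        have hmono := Submodule.finrank_mono hrangeπ
        rw [← hK] at hrn
        omega
      omega
    -- the trace functional
    set tF : F → F := fun x => ∑ k ∈ Finset.range m, x^2^k with htF
    have htF01 : ∀ x, tF x = 0 ∨ tF x = 1 := fun x => tr_zero_or_one hF x
    set τf : F → ZMod 2 := fun x => if tF x = 0 then 0 else 1 with hτf
    have hιτ : ∀ x, algebraMap (ZMod 2) F (τf x) = tF x := by
      intro x
      rcases htF01 x with h0 | h1
      · simp only [hτf, if_pos h0, map_zero, h0]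
      · simp only [hτf, h1, one_ne_zero, if_false, map_one]
    have hτadd : ∀ x y, τf (x + y) = τf x + τf y := by
      intro x y
      apply hinj
      rw [map_add, hιτ, hιτ, hιτ]
      exact tr_add m x y
    have hτ0 : τf 0 = 0 := by
      have h0 : tF 0 = 0 := tr_zero m
      simp only [hτf, if_pos h0]
    set τ : F →ₗ[ZMod 2] ZMod 2 :=
      { toFun := τf
        map_add' := hτadd
        map_smul' := by
          intro r x
          rw [RingHom.id_apply]
          rcases hzmod r with rfl | rfl
          · simp only [zero_smul]
            exact hτ0
          · rw [one_smul, one_smul] } with hτ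
    -- the pairing Ψ
    set bil : F × F × F → (F × F × F) →ₗ[ZMod 2] F := fun p =>
      { toFun := fun v => p.1 * v.1 + p.2.1 * v.2.1 + p.2.2 * v.2.2
        map_add' := by
          intro v w
          simp only [Prod.fst_add, Prod.snd_add]
          ring
        map_smul' := by
          intro r v
          rw [RingHom.id_apply]
          rcases hzmod r with rfl | rfl
          · simp
          · simp } with hbil
    have hbilapp : ∀ p v : F × F × F, bil p v = p.1 * v.1 + p.2.1 * v.2.1 + p.2.2 * v.2.2 :=
      fun p v => rfl
    set Ψ : (F × F × F) →ₗ[ZMod 2] Module.Dual (ZMod 2) (F × F × F) :=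
      { toFun := fun p => τ.comp (bil p)
        map_add' := by
          intro p p'
          apply LinearMap.ext
          intro v
          rw [LinearMap.add_apply, LinearMap.comp_apply, LinearMap.comp_apply,
            LinearMap.comp_apply]
          show τf (bil (p + p') v) = τf (bil p v) + τf (bil p' v)
          rw [← hτadd]
          congr 1
          rw [hbilapp, hbilapp, hbilapp]
          simp only [Prod.fst_add, Prod.snd_add]
          ring
        map_smul' := by
          intro r p
          rw [RingHom.id_apply]
          apply LinearMap.ext
          intro v
          rw [LinearMap.smul_apply, LinearMap.comp_apply, LinearMap.comp_apply]
          show τf (bil (r • p) v) = r • τf (bil p v)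
          rcases hzmod r with rfl | rfl
          · rw [zero_smul, zero_smul]
            show τf (bil 0 v) = 0
            rw [hbilapp]
            simp only [Prod.fst_zero, Prod.snd_zero, zero_mul, add_zero, zero_add]
            exact hτ0
          · rw [one_smul, one_smul] } with hΨ
    have hΨapp : ∀ p v : F × F × F, Ψ p v = τf (p.1 * v.1 + p.2.1 * v.2.1 + p.2.2 * v.2.2) :=
      fun p v => rfl
    -- injectivity of Ψ
    obtain ⟨y0, hy0⟩ := tr_exists_ne hm0 hF
    have hτne : ∀ w : F, w ≠ 0 → ∃ x, τf (w * x) ≠ 0 := by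
      intro w hw
      refine ⟨w⁻¹ * y0, ?_⟩
      rw [← mul_assoc, mul_inv_cancel₀ hw, one_mul]
      intro h0
      apply hy0
      have h1 := congrArg (algebraMap (ZMod 2) F) h0
      rw [hιτ, map_zero] at h1
      exact h1
    have hΨinj : Function.Injective Ψ := by
      rw [← LinearMap.ker_eq_bot]
      apply LinearMap.ker_eq_bot'.mpr
      intro p hp
      have happ : ∀ v : F × F × F, τf (p.1 * v.1 + p.2.1 * v.2.1 + p.2.2 * v.2.2) = 0 := by
        intro v
        rw [← hΨapp, hp]
        rfl
      have h1 : p.1 = 0 := by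
        by_contra hne
        obtain ⟨x, hx⟩ := hτne p.1 hne
        exact hx (by simpa using happ (x, 0, 0))
      have h2 : p.2.1 = 0 := by
        by_contra hne
        obtain ⟨x, hx⟩ := hτne p.2.1 hne
        exact hx (by simpa using happ (0, x, 0))
      have h3 : p.2.2 = 0 := by
        by_contra hne
        obtain ⟨x, hx⟩ := hτne p.2.2 hne
        exact hx (by simpa using happ (0, 0, x))
      exact Prod.ext h1 (Prod.ext h2 h3)
    have hΨsurj : Function.Surjective Ψ :=
      (LinearMap.injective_iff_surjective_of_finrank_eq_finrank
        Subspace.dual_finrank_eq.symm).mp hΨinj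
    -- α power reduction
    have hαred : ∀ s : ℕ, α ^ s = α ^ (s % n) := by
      intro s
      conv_lhs => rw [← Nat.div_add_mod s n]
      rw [pow_add, pow_mul, hα1, one_pow, one_mul]
    have hαcongr : ∀ s t : ℕ, s % n = t % n → α^s = α^t := fun s t hst => by
      rw [hαred s, hαred t, hst]
    -- range φ ≤ P
    set P := (⊤ : Submodule (ZMod 2) F).prod (K.prod (⊤ : Submodule (ZMod 2) F)) with hP
    have hπα : ∀ i : ℕ, π (α ^ (t2 * i)) = 0 := by
      intro i
      rw [hπapp, ← pow_mul]
      have hNN : (2:ℕ)^m = 2^(2*h) * 2^(2*h) := by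
        rw [← pow_add]
        congr 1
        omega
      have hexp : (t2*i*2^(2*h)) % n = (t2*i) % n := by
        have he : t2*i*2^(2*h) = t2*i + i*n := by
          rw [ht2, hn, hNN]
          have h1 : (1:ℕ) ≤ 2^(2*h) * 2^(2*h) := Nat.one_le_iff_ne_zero.mpr (by positivity)
          zify [h1]
          ring
        rw [he, Nat.add_mul_mod_self_right]
      rw [hαcongr _ _ hexp, CharTwo.add_self_eq_zero]
    have hrange_le : LinearMap.range φ ≤ P := by
      rintro v ⟨x, rfl⟩
      rw [hP, hφapp]
      refine Submodule.mem_prod.mpr ⟨trivial, Submodule.mem_prod.mpr ⟨?_, trivial⟩⟩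
      rw [hK, LinearMap.mem_ker, hL2, map_sum]
      apply Finset.sum_eq_zero
      intro i _
      rw [map_smul, hπα (i:ℕ), smul_zero]
    -- P ≤ range φ
    have hP_le : P ≤ LinearMap.range φ := by
      intro v hv
      by_contra hvr
      obtain ⟨f, hfv, hfmap⟩ := Submodule.exists_dual_map_eq_bot_of_notMem hvr inferInstance
      obtain ⟨p, rfl⟩ := hΨsurj f
      have hvan : ∀ i : Fin n,
          τf (p.1 * α^(1*(i:ℕ)) + p.2.1 * α^(t2*(i:ℕ)) + p.2.2 * α^(t3*(i:ℕ))) = 0 := by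
        intro i
        have hmem : φ (Pi.single i (1 : ZMod 2)) ∈ LinearMap.range φ := ⟨_, rfl⟩
        have hbot := hfmap ▸ Submodule.mem_map_of_mem hmem
        rw [Submodule.mem_bot] at hbot
        have hφs : φ (Pi.single i (1 : ZMod 2)) = (α^(1*(i:ℕ)), α^(t2*(i:ℕ)), α^(t3*(i:ℕ))) := by
          rw [hφapp, hL1, hL2, hL3]
          have hsing : ∀ j : ℕ,
              (∑ i' : Fin n, (Pi.single i (1:ZMod 2) : Fin n → ZMod 2) i' • α ^ (j * (i':ℕ)))
                = α ^ (j * (i:ℕ)) := by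
            intro j
            rw [Finset.sum_eq_single i]
            · rw [Pi.single_eq_same, one_smul]
            · intro i' _ hne
              rw [Pi.single_eq_of_ne hne, zero_smul]
            · intro habs
              exact absurd (Finset.mem_univ i) habs
          rw [hsing, hsing, hsing]
        rw [hφs] at hbot
        exact hbot
      have hall : ∀ x : F, (∑ k ∈ Finset.range m, (p.1 * x)^2^k)
          + (∑ k ∈ Finset.range m, (p.2.1 * x^t2)^2^k)
          + (∑ k ∈ Finset.range m, (p.2.2 * x^t3)^2^k) = 0 := by
        intro x
        rcases eq_or_ne x 0 with rfl | hx0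
        · rw [zero_pow (by omega : t2 ≠ 0), zero_pow (by omega : t3 ≠ 0),
            mul_zero, mul_zero, mul_zero]
          rw [tr_zero m]
          simp
        · obtain ⟨i, hi⟩ : ∃ i : Fin n, α^(i:ℕ) = x := by
            have hcardU : Fintype.card Fˣ = n := by rw [Fintype.card_units, hF, hn]
            have hou : orderOf (Units.mk0 α hα0) = n := by
              rw [← orderOf_units]
              exact hα
            have hinj2 : Function.Injective (fun i : Fin n => (Units.mk0 α hα0) ^ (i:ℕ)) := by
              intro i j hij
              apply Fin.ext
              apply pow_injOn_Iio_orderOf (x := Units.mk0 α hα0)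
              · rw [hou]; exact i.isLt
              · rw [hou]; exact j.isLt
              · exact hij
            have hbij := (Fintype.bijective_iff_injective_and_card _).mpr
              ⟨hinj2, by rw [Fintype.card_fin, hcardU]⟩
            obtain ⟨i, hi⟩ := hbij.surjective (Units.mk0 x hx0)
            refine ⟨i, ?_⟩
            have hval := congrArg Units.val hi
            simpa using hval
          have hv := hvan i
          have htsum : tF (p.1 * α^(1*(i:ℕ))) + tF (p.2.1 * α^(t2*(i:ℕ)))
              + tF (p.2.2 * α^(t3*(i:ℕ))) = 0 := by
            have h0 := congrArg (algebraMap (ZMod 2) F) hv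
            rw [hιτ, map_zero] at h0
            rw [← h0]
            simp only [htF]
            rw [tr_add m (p.1 * α^(1*(i:ℕ)) + p.2.1 * α^(t2*(i:ℕ))) (p.2.2 * α^(t3*(i:ℕ))),
              tr_add m (p.1 * α^(1*(i:ℕ))) (p.2.1 * α^(t2*(i:ℕ)))]
          have he2 : α^(t2*(i:ℕ)) = x^t2 := by
            rw [← hi, ← pow_mul, Nat.mul_comm]
          have he3 : α^(t3*(i:ℕ)) = x^t3 := by
            rw [← hi, ← pow_mul, Nat.mul_comm]
          have he1 : α^(1*(i:ℕ)) = x := by rw [one_mul, hi]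
          rw [he1, he2, he3] at htsum
          exact htsum
      obtain ⟨hpa, hpb, hpc⟩ := keylemma h m hh hm F hF p.1 p.2.1 p.2.2 (by
        intro x
        have := hall x
        rw [ht2, ht3] at this
        exact this)
      apply hfv
      rw [hΨapp, hpa, hpc, zero_mul, zero_mul, zero_add, add_zero]
      -- v.2.1 ∈ K
      have hv21 : v.2.1 ∈ K := by
        rw [hP] at hv
        exact (Submodule.mem_prod.mp (Submodule.mem_prod.mp hv).2).1
      rw [hK, LinearMap.mem_ker, hπapp] at hv21
      have hv21' : v.2.1 ^ (2^(2*h)) = v.2.1 := by linear_combination hv21 - v.2.1 * h2F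
      have hb' : p.2.1 ^ (2^(2*h)) = p.2.1 := by linear_combination hpb - p.2.1 * h2F
      have hprod : (p.2.1 * v.2.1) ^ (2^(2*h)) = p.2.1 * v.2.1 := by
        rw [mul_pow, hv21', hb']
      have htK : tF (p.2.1 * v.2.1) = 0 := by
        have := tr_K_zero (F := F) (h := h) hprod
        rw [htF, hm]
        exact this
      apply hinj
      rw [hιτ, map_zero]
      exact htK
    have hrange_eq : LinearMap.range φ = P := le_antisymm hrange_le hP_le
    -- finrank of P
    set ξ : F × (↥K × F) →ₗ[ZMod 2] F × F × F :=
      (LinearMap.id).prodMap ((K.subtype).prodMap LinearMap.id) with hξ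
    have hξapp : ∀ w : F × (↥K × F), ξ w = (w.1, ((w.2.1 : F), w.2.2)) := fun w => rfl
    have hξinj : Function.Injective ξ := by
      intro w w' hww
      rw [hξapp, hξapp, Prod.mk.injEq, Prod.mk.injEq] at hww
      obtain ⟨h1, h2, h3⟩ := hww
      exact Prod.ext h1 (Prod.ext (Subtype.ext h2) h3)
    have hξrange : LinearMap.range ξ = P := by
      apply le_antisymm
      · rintro v ⟨w, rfl⟩
        rw [hξapp, hP]
        exact Submodule.mem_prod.mpr ⟨trivial, Submodule.mem_prod.mpr ⟨w.2.1.2, trivial⟩⟩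
      · intro v hv
        rw [hP] at hv
        have hv21 : v.2.1 ∈ K := (Submodule.mem_prod.mp (Submodule.mem_prod.mp hv).2).1
        exact ⟨(v.1, (⟨v.2.1, hv21⟩, v.2.2)), rfl⟩
    have hrkP : Module.finrank (ZMod 2) P = m + (2*h + m) := by
      rw [← hξrange, LinearMap.finrank_range_of_inj hξinj, Module.finrank_prod,
        Module.finrank_prod, hrkF, hrkK]
    -- conclude
    have hrn := LinearMap.finrank_range_add_finrank_ker φ
    rw [Module.finrank_fin_fun, hrange_eq, hrkP] at hrn
    refine ⟨LinearMap.ker φ, hker, ?_⟩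
    have h16h : 16 * h ≤ 2^m := by
      calc 16 * h ≤ 16^h := sixteen_pow hh
      _ = 2^m := by rw [hm, pow_mul]; norm_num
    omega
  · -- IsLeast
    -- the weight-3 codeword
    have h2hmod : (2:ℕ)^(2*h) % 3 = 1 := by
      rw [show (2:ℕ)^(2*h) = 4^h from by rw [show (4:ℕ) = 2^2 from rfl, ← pow_mul, Nat.mul_comm]]
      rw [Nat.pow_mod]
      norm_num
    have hhmod : (2:ℕ)^h % 3 = 2 := by
      obtain ⟨t, rfl⟩ := hho
      rw [show 2*t+1 = 1 + 2*t from by omega, pow_add, pow_one,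
        show (2:ℕ)^(2*t) = 4^t from by rw [show (4:ℕ) = 2^2 from rfl, ← pow_mul, Nat.mul_comm]]
      rw [Nat.mul_mod, Nat.pow_mod]
      norm_num
    have h3dvd : 3 * (n/3) = n := by
      have hmod : (2:ℕ)^m % 3 = 1 := by
        rw [hm, show (2:ℕ)^(4*h) = 4^(2*h) from by
          rw [show (4:ℕ) = 2^2 from rfl, ← pow_mul]; ring_nf]
        rw [Nat.pow_mod]; norm_num
      omega
    set a := n / 3 with ha
    have ha1 : 1 ≤ a := by omega
    have ha2n : 2*a < n := by omega
    set u := α ^ a with hu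
    have hu3 : u ^ 3 = 1 := by
      rw [hu, ← pow_mul, show a*3 = n from by omega]
      exact hα1
    have hune : u ≠ 1 := by
      intro h1
      have h2 := orderOf_le_of_pow_eq_one (n := a) (by omega) h1
      omega
    have huq : 1 + u + u^2 = 0 := by
      have hfac : (u + 1) * (u^2 + u + 1) = 0 := by
        have h30 : u^3 - 1 = 0 := by rw [hu3, sub_self]
        linear_combination h30 + (u^2 + u + 1) * h2F
      rcases mul_eq_zero.mp hfac with h1 | h1
      · exfalso
        apply hune
        linear_combination h1 - h2F
      · linear_combination h1
    have hupow : ∀ j : ℕ, u ^ j = u ^ (j % 3) := by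
      intro j
      conv_lhs => rw [← Nat.div_add_mod j 3]
      rw [pow_add, pow_mul, hu3, one_pow, one_mul]
    -- the three support points
    have hi0 : (0:ℕ) < n := by omega
    have hi1 : a < n := by omega
    have hi2 : 2*a < n := ha2n
    set p0 : Fin n := ⟨0, hi0⟩ with hp0
    set p1 : Fin n := ⟨a, hi1⟩ with hp1
    set p2 : Fin n := ⟨2*a, hi2⟩ with hp2
    have hne01 : p0 ≠ p1 := Fin.ne_of_val_ne (by simp [hp0, hp1]; omega)
    have hne02 : p0 ≠ p2 := Fin.ne_of_val_ne (by simp [hp0, hp2]; omega)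
    have hne12 : p1 ≠ p2 := Fin.ne_of_val_ne (by simp [hp1, hp2]; omega)
    set c₀ : Fin n → ZMod 2 := fun i => if i = p0 ∨ i = p1 ∨ i = p2 then 1 else 0 with hc₀
    have hc₀sum : ∀ j : ℕ, ∑ i : Fin n, c₀ i • α ^ (j * (i:ℕ))
        = α ^ (j * 0) + α ^ (j * a) + α ^ (j * (2*a)) := by
      intro j
      rw [← Finset.sum_subset (Finset.subset_univ ({p0, p1, p2} : Finset (Fin n)))
        (fun i _ hi => by
          simp only [Finset.mem_insert, Finset.mem_singleton] at hi
          simp only [hc₀]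
          rw [if_neg (by tauto), zero_smul])]
      rw [Finset.sum_insert (by simp [hne01, hne02]),
        Finset.sum_pair hne12]
      simp only [hc₀, eq_self_iff_true, true_or, or_true, if_true, one_smul, hp0, hp1, hp2]
      ring
    have hterm : ∀ j : ℕ, j % 3 = 1 ∨ j % 3 = 2 →
        α ^ (j * 0) + α ^ (j * a) + α ^ (j * (2*a)) = 0 := by
      intro j hj
      have e1 : α ^ (j * 0) = 1 := by rw [Nat.mul_zero, pow_zero]
      have e2 : α ^ (j * a) = u ^ j := by rw [hu, ← pow_mul, Nat.mul_comm a j]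
      have e3 : α ^ (j * (2*a)) = u ^ (2*j) := by
        rw [hu, ← pow_mul, show j * (2*a) = a * (2*j) from by ring]
      rw [e1, e2, e3, hupow j, hupow (2*j)]
      rcases hj with hj | hj
      · rw [hj, show (2*j) % 3 = 2 from by omega]
        linear_combination huq
      · rw [hj, show (2*j) % 3 = 1 from by omega]
        linear_combination huq
    have hc₀C : c₀ ∈ C := by
      rw [hC]
      intro j hj
      simp only [Set.mem_insert_iff, Set.mem_singleton_iff] at hj
      rw [hc₀sum j]
      rcases hj with rfl | rfl | rfl
      · exact hterm 1 (Or.inl rfl)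
      · exact hterm _ (Or.inr (by omega))
      · exact hterm _ (Or.inl (by omega))
    have hc₀ne : c₀ ≠ 0 := by
      intro h0
      have := congrFun h0 p0
      simp only [hc₀, if_pos (Or.inl (rfl : p0 = p0))] at this
      exact one_ne_zero this
    have hc₀norm : hammingNorm c₀ = 3 := by
      rw [hammingNorm]
      have hfil : (Finset.univ.filter fun i => c₀ i ≠ 0) = {p0, p1, p2} := by
        ext i
        simp only [Finset.mem_filter, Finset.mem_univ, true_and, Finset.mem_insert,
          Finset.mem_singleton, hc₀]
        by_cases hi : i = p0 ∨ i = p1 ∨ i = p2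
        · simp [if_pos hi, hi]
        · simp [if_neg hi]
          tauto
      rw [hfil, Finset.card_insert_of_notMem (by simp [hne01, hne02]),
        Finset.card_pair hne12]
    constructor
    · exact ⟨c₀, hc₀C, hc₀ne, hc₀norm⟩
    · -- lower bound
      rintro w ⟨c, hcC, hcne, rfl⟩
      by_contra hlt
      push_neg at hlt
      set s := Finset.univ.filter fun i => c i ≠ 0 with hs
      have hcard : s.card ≤ 2 := by
        have : hammingNorm c = s.card := rfl
        omega
      have hspos : s.Nonempty := by
        rw [Finset.nonempty_iff_ne_empty]
        intro h0
        apply hcne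
        funext i
        rw [Pi.zero_apply]
        by_contra hci
        have : i ∈ s := by simp [hs, hci]
        rw [h0] at this
        exact absurd this (Finset.notMem_empty i)
      have hone : ∀ z : ZMod 2, z ≠ 0 → z = 1 := by decide
      have hsum : ∑ i ∈ s, α ^ (i:ℕ) = 0 := by
        rw [hC] at hcC
        have h1 := hcC 1 (by simp)
        rw [← Finset.sum_subset (Finset.subset_univ s)
          (fun i _ hi => by
            have : c i = 0 := by
              by_contra hci
              exact hi (by simp [hs, hci])
            rw [this, zero_smul])] at h1
        rw [← h1]
        apply Finset.sum_congr rfl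
        intro i hi
        have hci : c i = 1 := hone _ (by simp [hs] at hi; exact hi)
        rw [hci, one_smul, one_mul]
      interval_cases hcv : s.card
      · exact absurd (Finset.card_eq_zero.mp hcv ▸ hspos) (by simp)
      · obtain ⟨i, hi⟩ := Finset.card_eq_one.mp hcv
        rw [hi, Finset.sum_singleton] at hsum
        exact pow_ne_zero _ hα0 hsum
      · obtain ⟨i, j, hij, hij2⟩ := Finset.card_eq_two.mp hcv
        rw [hij2, Finset.sum_pair hij] at hsum
        have : α ^ (i:ℕ) = α ^ (j:ℕ) := by
          linear_combination hsum - (α^(j:ℕ)) * h2F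
        exact hij (Fin.ext (hpow_inj _ _ i.isLt j.isLt this))
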